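/- Symmetry lemma for improving elements: let elements 1,…,n have strictly decreasing weights, let X₁,…,Xₙ and Y₁,…,Yₙ be mutually independent Bernoulli random variables with P(Xᵢ=1)=2p and P(Yᵢ=1)=1/2, and set S = {i : Xᵢ=1, Yᵢ=1}, T = {i : Xᵢ=1, Yᵢ=0}. Let T* ⊆ T be the elements of T that improve S w.r.t. a matroid M' and S* the max-weight basis of S in M'. Then E[w(T*)] = E[w(S*)]. -/

import Mathlib

open MeasureTheory ProbabilityTheory Finset Classical

noncomputable section

/-- `B` is the max-weight basis `OPT(S, M)` of `S` w.r.t. weights `w`: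
an independent subset of `S` of maximum total weight. -/
def IsMaxWeightBasis {α : Type*} (M : Matroid α) (w : α → ℝ) (S B : Finset α) : Prop :=
  B ⊆ S ∧ M.Indep ↑B ∧ ∀ B' : Finset α, B' ⊆ S → M.Indep ↑B' → ∑ j ∈ B', w j ≤ ∑ j ∈ B, w j

/-- The max-weight basis `OPT(S, M)` (a choice of one; it is unique for distinct
weights). -/
noncomputable def OPT {α : Type*} (M : Matroid α) (w : α → ℝ) (S : Finset α) : Finset α :=
  if h : ∃ B, IsMaxWeightBasis M w S B then h.choose else ∅

/-- `i` improves `S` w.r.t. `M`: `i` belongs to the max-weight basis of `S ∪ {i}`. -/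
noncomputable def Improves {α : Type*} [DecidableEq α] (M : Matroid α) (w : α → ℝ)
    (i : α) (S : Finset α) : Prop :=
  i ∈ OPT M w (insert i S)

/-- A max-weight basis always exists. -/
lemma exists_isMaxWeightBasis {α : Type*} [DecidableEq α] (M : Matroid α) (w : α → ℝ)
    (S : Finset α) : ∃ B, IsMaxWeightBasis M w S B := by
  classical
  have h0 : (S.powerset.filter (fun B : Finset α => M.Indep (↑B : Set α))).Nonempty :=
    ⟨∅, by simp [M.empty_indep]⟩
  obtain ⟨B, hB, hmax⟩ := Finset.exists_max_image
    (S.powerset.filter (fun B : Finset α => M.Indep (↑B : Set α)))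
    (fun B => ∑ j ∈ B, w j) h0
  simp only [Finset.mem_filter, Finset.mem_powerset] at hB
  refine ⟨B, hB.1, hB.2, fun B' h1 h2 => ?_⟩
  exact hmax B' (by simp [Finset.mem_filter, Finset.mem_powerset, h1, h2])

lemma OPT_spec {α : Type*} [DecidableEq α] (M : Matroid α) (w : α → ℝ) (S : Finset α) :
    IsMaxWeightBasis M w S (OPT M w S) := by
  rw [OPT, dif_pos (exists_isMaxWeightBasis M w S)]
  exact (exists_isMaxWeightBasis M w S).choose_spec

/-- Augmentation: an independent set can be extended inside `I ∪ J` to an independent set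
at least as large as `J`. -/
lemma augment_to {α : Type*} [DecidableEq α] (M : Matroid α) (J : Finset α) (hJ : M.Indep ↑J) :
    ∀ (d : ℕ) (I : Finset α), M.Indep ↑I → J.card - I.card ≤ d →
      ∃ K : Finset α, I ⊆ K ∧ K ⊆ I ∪ J ∧ M.Indep ↑K ∧ J.card ≤ K.card := by
  intro d
  induction d with
  | zero =>
    intro I hI hd
    exact ⟨I, Finset.Subset.refl I, Finset.subset_union_left, hI,
      Nat.sub_eq_zero_iff_le.mp (Nat.le_zero.mp hd)⟩
  | succ d ih =>
    intro I hI hd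
    by_cases hle : J.card ≤ I.card
    · exact ⟨I, Finset.Subset.refl I, Finset.subset_union_left, hI, hle⟩
    · push_neg at hle
      have hlt : (↑I : Set α).encard < (↑J : Set α).encard := by
        rw [Set.encard_coe_eq_coe_finsetCard, Set.encard_coe_eq_coe_finsetCard]
        exact_mod_cast hle
      obtain ⟨e, he, hind⟩ := hI.augment hJ hlt
      have heJ : e ∈ J := by simpa using he.1
      have heI : e ∉ I := by simpa using he.2
      have hind' : M.Indep ↑(insert e I) := by rw [Finset.coe_insert]; exact hind
      have hcard : (insert e I).card = I.card + 1 := Finset.card_insert_of_notMem heI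
      obtain ⟨K, h1, h2, h3, h4⟩ := ih (insert e I) hind' (by omega)
      refine ⟨K, (Finset.subset_insert e I).trans h1, ?_, h3, h4⟩
      intro x hx
      rcases Finset.mem_union.mp (h2 hx) with hx' | hx'
      · rcases Finset.mem_insert.mp hx' with rfl | hx''
        · exact Finset.mem_union_right _ heJ
        · exact Finset.mem_union_left _ hx''
      · exact Finset.mem_union_right _ hx'

/-- Key characterization: for a positive-weight element `i ∈ A`, `i` belongs to the chosen
max-weight basis of `A` iff `i` is not spanned by the elements of `A` of larger weight. -/
lemma mem_OPT_iff {n : ℕ} (M' : Matroid (Fin n)) (hE : M'.E = Set.univ)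
    (w : Fin n → ℝ) (hwdec : ∀ i j : Fin n, i < j → w j < w i)
    (A : Finset (Fin n)) (i : Fin n) (hiA : i ∈ A) (hwi : 0 < w i) :
    i ∈ OPT M' w A ↔ i ∉ M'.closure ↑(A.filter (fun j => j < i)) := by
  obtain ⟨hBS, hBI, hBmax⟩ := OPT_spec M' w A
  set B := OPT M' w A with hB
  have hground : ∀ (X : Set (Fin n)), X ⊆ M'.E := fun X => by
    rw [hE]; exact Set.subset_univ _
  constructor
  · -- i ∈ B → i not in closure of the prefix
    intro hiB hicl
    set P : Set (Fin n) := ↑(A.filter (fun j => j < i)) with hP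
    obtain ⟨J, hJ⟩ := M'.exists_isBasis P (hground P)
    have hiclJ : i ∈ M'.closure J := by rw [hJ.closure_eq_closure]; exact hicl
    -- find j ∈ J not spanned by B \ {i}
    have hBdiffI : M'.Indep (↑B \ {i}) := hBI.subset Set.diff_subset
    have hexj : ∃ j ∈ J, j ∉ M'.closure (↑B \ {i}) := by
      by_contra hcon
      push_neg at hcon
      have hJsub : J ⊆ M'.closure (↑B \ {i}) := fun j hj => hcon j hj
      have : i ∈ M'.closure (↑B \ {i}) :=
        M'.closure_subset_closure_of_subset_closure hJsub hiclJ
      have hinB : i ∉ (↑B \ {i} : Set (Fin n)) := by simp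
      have hdep := (hBdiffI.mem_closure_iff_of_notMem hinB).mp this
      have : (insert i (↑B \ {i}) : Set (Fin n)) = ↑B := by
        rw [Set.insert_diff_singleton]
        exact Set.insert_eq_of_mem (by exact_mod_cast hiB)
      rw [this] at hdep
      exact hBI.not_dep hdep
    obtain ⟨j, hjJ, hjncl⟩ := hexj
    have hjP : j ∈ A.filter (fun k => k < i) := by exact_mod_cast hJ.subset hjJ
    have hjA : j ∈ A := (Finset.mem_filter.mp hjP).1
    have hjlt : j < i := (Finset.mem_filter.mp hjP).2
    have hjnB : j ∉ (↑B \ {i} : Set (Fin n)) := fun h =>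
      hjncl (M'.subset_closure _ (hground _) h)
    have hindep : M'.Indep (insert j (↑B \ {i})) :=
      ((hBdiffI.notMem_closure_iff (hground _ (Set.mem_univ j))).mp hjncl).1
    -- the finset B' = insert j (B.erase i) contradicts maximality
    set B' : Finset (Fin n) := insert j (B.erase i) with hB'
    have hB'coe : (↑B' : Set (Fin n)) = insert j (↑B \ {i}) := by
      rw [hB', Finset.coe_insert, Finset.coe_erase]
    have hB'A : B' ⊆ A := by
      intro x hx
      rcases Finset.mem_insert.mp hx with rfl | hx'
      · exact hjA
      · exact hBS (Finset.mem_of_mem_erase hx')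
    have hB'I : M'.Indep ↑B' := by rw [hB'coe]; exact hindep
    have hjne : j ∉ B.erase i := by
      intro h
      exact hjnB (by simpa using (Finset.mem_coe.mpr h))
    have hsum : ∑ x ∈ B', w x = w j + (∑ x ∈ B, w x - w i) := by
      rw [hB', Finset.sum_insert hjne, Finset.sum_erase_eq_sub hiB]
    have hwj : w i < w j := hwdec j i hjlt
    have := hBmax B' hB'A hB'I
    rw [hsum] at this
    linarith
  · -- contrapositive: i ∉ B with i not spanned by the prefix contradicts maximality
    intro hncl
    by_contra hiB
    set D : Finset (Fin n) := B.filter (fun j => j < i) with hD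
    have hDsub : (↑D : Set (Fin n)) ⊆ ↑(A.filter (fun j => j < i)) := by
      intro x hx
      have hx' : x ∈ D := hx
      rw [hD, Finset.mem_filter] at hx'
      exact Finset.mem_coe.mpr (Finset.mem_filter.mpr ⟨hBS hx'.1, hx'.2⟩)
    have hnclD : i ∉ M'.closure ↑D := fun h => hncl (M'.closure_subset_closure hDsub h)
    have hDI : M'.Indep ↑D := hBI.subset (by exact_mod_cast Finset.filter_subset _ B)
    have hI0 : M'.Indep ↑(insert i D) := by
      rw [Finset.coe_insert]
      exact ((hDI.notMem_closure_iff (hground _ (Set.mem_univ i))).mp hnclD).1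
    obtain ⟨K, hK1, hK2, hK3, hK4⟩ := augment_to M' B hBI B.card (insert i D) hI0 (by omega)
    have hiK : i ∈ K := hK1 (Finset.mem_insert_self i D)
    have hKsub : K ⊆ insert i B := by
      intro x hx
      rcases Finset.mem_union.mp (hK2 hx) with hx' | hx'
      · rcases Finset.mem_insert.mp hx' with rfl | hx''
        · exact Finset.mem_insert_self _ _
        · exact Finset.mem_insert_of_mem (Finset.mem_of_mem_filter _ hx'')
      · exact Finset.mem_insert_of_mem hx'
    have hKA : K ⊆ A := by
      intro x hx
      rcases Finset.mem_insert.mp (hKsub hx) with rfl | hx'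
      · exact hiA
      · exact hBS hx'
    -- K \ B ⊆ {i}
    have hKdB : K \ B ⊆ {i} := by
      intro x hx
      rcases Finset.mem_sdiff.mp hx with ⟨hx1, hx2⟩
      rcases Finset.mem_insert.mp (hKsub hx1) with rfl | hx'
      · exact Finset.mem_singleton_self _
      · exact absurd hx' hx2
    have hcard1 : (B \ K).card ≤ 1 := by
      have e1 := Finset.card_sdiff_add_card_inter K B
      have e2 := Finset.card_sdiff_add_card_inter B K
      have e3 : (K \ B).card ≤ 1 := le_trans (Finset.card_le_card hKdB) (by simp)
      have e4 : K ∩ B = B ∩ K := Finset.inter_comm _ _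
      rw [e4] at e1
      omega
    rcases Finset.eq_empty_or_nonempty (B \ K) with hBK | ⟨j, hj⟩
    · -- K = insert i B, strictly heavier than B
      have hBsubK : B ⊆ K := by
        intro x hx
        by_contra hxK
        exact absurd (Finset.mem_sdiff.mpr ⟨hx, hxK⟩) (by rw [hBK]; simp)
      have hKeq : K = insert i B :=
        Finset.Subset.antisymm hKsub (Finset.insert_subset hiK hBsubK)
      have hsum : ∑ x ∈ K, w x = w i + ∑ x ∈ B, w x := by
        rw [hKeq, Finset.sum_insert (by simpa using hiB)]
      have := hBmax K hKA hK3
      rw [hsum] at this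
      linarith
    · -- B \ K = {j} with j > i; swap gives a heavier set
      have hjB : j ∈ B := (Finset.mem_sdiff.mp hj).1
      have hjK : j ∉ K := (Finset.mem_sdiff.mp hj).2
      have huniq : ∀ x ∈ B \ K, x = j := by
        intro x hx
        exact Finset.card_le_one.mp hcard1 x hx j hj
      have hjnD : j ∉ D := fun h => hjK (hK1 (Finset.mem_insert_of_mem h))
      have hjnlt : ¬ j < i := fun h => hjnD (Finset.mem_filter.mpr ⟨hjB, h⟩)
      have hjne : j ≠ i := fun h => hiB (h ▸ hjB)
      have hij : i < j := lt_of_le_of_ne (not_lt.mp hjnlt) (Ne.symm hjne)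
      have hKeq : K = insert i (B.erase j) := by
        apply Finset.Subset.antisymm
        · intro x hx
          rcases Finset.mem_insert.mp (hKsub hx) with rfl | hx'
          · exact Finset.mem_insert_self _ _
          · refine Finset.mem_insert_of_mem (Finset.mem_erase.mpr ⟨?_, hx'⟩)
            rintro rfl; exact hjK hx
        · intro x hx
          rcases Finset.mem_insert.mp hx with rfl | hx'
          · exact hiK
          · by_contra hxK
            have := huniq x (Finset.mem_sdiff.mpr ⟨Finset.mem_of_mem_erase hx', hxK⟩)
            exact (Finset.mem_erase.mp hx').1 this
      have hinej : i ∉ B.erase j := fun h => hiB (Finset.mem_of_mem_erase h)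
      have hsum : ∑ x ∈ K, w x = w i + (∑ x ∈ B, w x - w j) := by
        rw [hKeq, Finset.sum_insert hinej, Finset.sum_erase_eq_sub hjB]
      have hwj : w j < w i := hwdec i j hij
      have := hBmax K hKA hK3
      rw [hsum] at this
      linarith

/-- In a finite discrete product of `Bool`s, every set is measurable. -/
lemma measurableSet_pi_bool {γ : Type*} [Finite γ] (s : Set (γ → Bool)) :
    MeasurableSet s := by
  have hsing : ∀ f : γ → Bool, MeasurableSet ({f} : Set (γ → Bool)) := by
    intro f
    have : ({f} : Set (γ → Bool)) = ⋂ j, (fun v : γ → Bool => v j) ⁻¹' {f j} := by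
      ext g; simp [funext_iff]
    rw [this]
    exact MeasurableSet.iInter fun j => (measurable_pi_apply j) (measurableSet_singleton _)
  have : s = ⋃ f ∈ s, ({f} : Set (γ → Bool)) := by simp
  rw [this]
  exact MeasurableSet.biUnion (Set.to_countable s) fun f _ => hsing f

/-- symmetry lemma for improving elements: elements `1, …, n` have
strictly decreasing weights; `X₁, …, Xₙ, Y₁, …, Yₙ` are mutually independent Bernoulli
random variables with `P(Xᵢ = 1) = 2p` and `P(Yᵢ = 1) = 1/2`;
`S = {i : Xᵢ = 1, Yᵢ = 1}` and `T = {i : Xᵢ = 1, Yᵢ = 0}`; `T*` is the set of elements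
of `T` improving `S` w.r.t. the matroid `M'`, and `S* = OPT(S, M')`. Then
`E[w(T*)] = E[w(S*)]`. -/
theorem expected_weight_improving_symmetric {Ω : Type*} [MeasurableSpace Ω]
    (μ : Measure Ω) [IsProbabilityMeasure μ] (n : ℕ)
    (M' : Matroid (Fin n)) (hE : M'.E = Set.univ)
    (w : Fin n → ℝ) (hw0 : ∀ i, 0 ≤ w i) (hwdec : ∀ i j : Fin n, i < j → w j < w i)
    (p : ℝ) (X Y : Fin n → Ω → Bool)
    (hmX : ∀ i, Measurable (X i)) (hmY : ∀ i, Measurable (Y i))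
    (hindep : iIndepFun (Sum.elim X Y) μ)
    (hX : ∀ i, μ {ω | X i ω = true} = ENNReal.ofReal (2 * p))
    (hY : ∀ i, μ {ω | Y i ω = true} = 1 / 2) :
    (∫ ω, ∑ i ∈ Finset.univ.filter (fun i => X i ω = true ∧ Y i ω = false ∧
        Improves M' w i (Finset.univ.filter (fun j => X j ω = true ∧ Y j ω = true))),
        w i ∂μ) =
    ∫ ω, ∑ i ∈ OPT M' w (Finset.univ.filter (fun j => X j ω = true ∧ Y j ω = true)),
        w i ∂μ := by
  classical
  -- notation
  set Sf : Ω → Finset (Fin n) := fun ω =>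
    Finset.univ.filter (fun j => X j ω = true ∧ Y j ω = true) with hSf
  set Cnd : Fin n → Ω → Prop := fun i ω =>
    i ∉ M'.closure ↑((Sf ω).filter (fun j => j < i)) with hCnd
  set Eset : Fin n → Set Ω := fun i => {ω | X i ω = true ∧ Cnd i ω} with hEset
  set Lset : Fin n → Set Ω := fun i => Eset i ∩ Y i ⁻¹' {false} with hLset
  set Rset : Fin n → Set Ω := fun i => Eset i ∩ Y i ⁻¹' {true} with hRset
  -- measurability of Eset i; via the map collecting all variables except Y i
  have hEmeas : ∀ i, MeasurableSet (Eset i) ∧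
      ∀ b : Bool, μ (Eset i ∩ Y i ⁻¹' {b}) = μ (Eset i) * μ (Y i ⁻¹' {b}) := by
    intro i
    set F : Finset (Fin n ⊕ Fin n) := Finset.univ.erase (Sum.inr i) with hF
    set g : Ω → ({x // x ∈ F} → Bool) := fun ω k => Sum.elim X Y k.1 ω with hg
    have hgm : Measurable g := by
      apply measurable_pi_lambda
      rintro ⟨(k | k), hk⟩
      · exact hmX k
      · exact hmY k
    -- saturation of Eset i under g
    have hsat : ∀ ω ω', g ω = g ω' → (ω ∈ Eset i → ω' ∈ Eset i) := by
      intro ω ω' hgeq hω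
      have hXeq : ∀ j, X j ω = X j ω' := by
        intro j
        have hmem : (Sum.inl j : Fin n ⊕ Fin n) ∈ F := by simp [hF]
        exact congrFun hgeq ⟨Sum.inl j, hmem⟩
      have hYeq : ∀ j, j ≠ i → Y j ω = Y j ω' := by
        intro j hj
        have hmem : (Sum.inr j : Fin n ⊕ Fin n) ∈ F := by simp [hF, hj]
        exact congrFun hgeq ⟨Sum.inr j, hmem⟩
      have hpre : (Sf ω).filter (fun j => j < i) = (Sf ω').filter (fun j => j < i) := by
        ext j
        simp only [hSf, Finset.mem_filter, Finset.mem_univ, true_and]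
        constructor
        · rintro ⟨⟨h1, h2⟩, h3⟩
          exact ⟨⟨(hXeq j) ▸ h1, (hYeq j (ne_of_lt h3)) ▸ h2⟩, h3⟩
        · rintro ⟨⟨h1, h2⟩, h3⟩
          exact ⟨⟨(hXeq j).trans h1, (hYeq j (ne_of_lt h3)).trans h2⟩, h3⟩
      obtain ⟨h1, h2⟩ := hω
      refine ⟨(hXeq i).symm.trans h1, ?_⟩
      simp only [hCnd] at h2 ⊢
      rw [← hpre]
      exact h2
    have hpreim : Eset i = g ⁻¹' (g '' Eset i) := by
      apply Set.Subset.antisymm (Set.subset_preimage_image g (Eset i))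
      rintro ω ⟨ω', hω', hgeq⟩
      exact hsat ω' ω hgeq hω'
    have hEm : MeasurableSet (Eset i) := by
      rw [hpreim]
      exact hgm (measurableSet_pi_bool _)
    refine ⟨hEm, fun b => ?_⟩
    -- independence of g and Y i
    have hdisj : Disjoint F ({Sum.inr i} : Finset (Fin n ⊕ Fin n)) := by
      simp [hF, Finset.disjoint_singleton_right]
    have hfm : ∀ k : Fin n ⊕ Fin n, Measurable (Sum.elim X Y k) := by
      rintro (k | k)
      · exact hmX k
      · exact hmY k
    have hind2 := hindep.indepFun_finset F {Sum.inr i} hdisj hfm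
    have hmemi : (Sum.inr i : Fin n ⊕ Fin n) ∈ ({Sum.inr i} : Finset (Fin n ⊕ Fin n)) :=
      Finset.mem_singleton_self _
    have hindYi : IndepFun g (Y i) μ := by
      have h := hind2.comp (_mγ' := (inferInstance : MeasurableSpace Bool)) (φ := id)
        (ψ := fun v : ({x // x ∈ ({Sum.inr i} : Finset (Fin n ⊕ Fin n))} → Bool) =>
          v ⟨Sum.inr i, hmemi⟩) measurable_id (measurable_pi_apply _)
      exact h
    have := hindYi.measure_inter_preimage_eq_mul (g '' Eset i) {b}
      (measurableSet_pi_bool _) (measurableSet_singleton _)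
    rw [← hpreim] at this
    exact this
  -- μ (Y i ⁻¹' {false}) = μ (Y i ⁻¹' {true})
  have hYhalf : ∀ i, μ (Y i ⁻¹' {false}) = μ (Y i ⁻¹' {true}) := by
    intro i
    have htrue : Y i ⁻¹' {true} = {ω | Y i ω = true} := rfl
    have hcompl : Y i ⁻¹' {false} = (Y i ⁻¹' {true})ᶜ := by
      ext ω
      simp only [Set.mem_preimage, Set.mem_singleton_iff, Set.mem_compl_iff,
        Bool.not_eq_true]
    rw [hcompl, measure_compl ((hmY i) (measurableSet_singleton _)) (measure_ne_top μ _),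
      measure_univ, htrue, hY i]
    simp [one_div, ENNReal.one_sub_inv_two]
  -- per-index measure equality
  have hmeq : ∀ i, μ (Lset i) = μ (Rset i) := by
    intro i
    obtain ⟨hEm, hfac⟩ := hEmeas i
    rw [hLset, hRset]
    simp only
    rw [hfac false, hfac true, hYhalf i]
  have hLmeas : ∀ i, MeasurableSet (Lset i) :=
    fun i => (hEmeas i).1.inter ((hmY i) (measurableSet_singleton _))
  have hRmeas : ∀ i, MeasurableSet (Rset i) :=
    fun i => (hEmeas i).1.inter ((hmY i) (measurableSet_singleton _))
  -- pointwise rewriting of the two integrands as sums of indicators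
  have hLpt : ∀ ω, (∑ i ∈ Finset.univ.filter (fun i => X i ω = true ∧ Y i ω = false ∧
        Improves M' w i (Sf ω)), w i) =
      ∑ i : Fin n, (Lset i).indicator (fun _ => w i) ω := by
    intro ω
    rw [Finset.sum_filter]
    apply Finset.sum_congr rfl
    intro i _
    have hmemL : ω ∈ Lset i ↔ (X i ω = true ∧ Y i ω = false ∧ Cnd i ω) := by
      simp only [hLset, hEset, Set.mem_inter_iff, Set.mem_setOf_eq, Set.mem_preimage,
        Set.mem_singleton_iff]
      tauto
    rcases eq_or_lt_of_le (hw0 i) with h0 | hpos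
    · simp [Set.indicator_apply, ← h0]
    · have hiff : Improves M' w i (Sf ω) ↔ Cnd i ω := by
        rw [Improves, mem_OPT_iff M' hE w hwdec _ i (Finset.mem_insert_self i (Sf ω)) hpos,
          Finset.filter_insert, if_neg (lt_irrefl i)]
      rw [Set.indicator_apply]
      refine if_congr ?_ rfl rfl
      rw [hmemL]
      tauto
  have hRpt : ∀ ω, (∑ i ∈ OPT M' w (Sf ω), w i) =
      ∑ i : Fin n, (Rset i).indicator (fun _ => w i) ω := by
    intro ω
    have : (∑ i ∈ OPT M' w (Sf ω), w i) =
        ∑ i : Fin n, if i ∈ OPT M' w (Sf ω) then w i else 0 := by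
      rw [Finset.sum_ite_mem, Finset.univ_inter]
    rw [this]
    apply Finset.sum_congr rfl
    intro i _
    have hmemR : ω ∈ Rset i ↔ (X i ω = true ∧ Y i ω = true ∧ Cnd i ω) := by
      simp only [hRset, hEset, Set.mem_inter_iff, Set.mem_setOf_eq, Set.mem_preimage,
        Set.mem_singleton_iff]
      tauto
    rcases eq_or_lt_of_le (hw0 i) with h0 | hpos
    · simp [Set.indicator_apply, ← h0]
    · have hiS : i ∈ Sf ω ↔ (X i ω = true ∧ Y i ω = true) := by
        simp [hSf]
      have hiff : i ∈ OPT M' w (Sf ω) ↔ (X i ω = true ∧ Y i ω = true ∧ Cnd i ω) := by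
        constructor
        · intro h
          have hiSf : i ∈ Sf ω := (OPT_spec M' w (Sf ω)).1 h
          have := (mem_OPT_iff M' hE w hwdec _ i hiSf hpos).mp h
          rcases hiS.mp hiSf with ⟨h1, h2⟩
          exact ⟨h1, h2, this⟩
        · rintro ⟨h1, h2, h3⟩
          exact (mem_OPT_iff M' hE w hwdec _ i (hiS.mpr ⟨h1, h2⟩) hpos).mpr h3
      rw [Set.indicator_apply]
      refine if_congr ?_ rfl rfl
      rw [hmemR, hiff]
  -- compute both integrals
  have hLi : ∀ i : Fin n, Integrable ((Lset i).indicator (fun _ => w i)) μ :=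
    fun i => (integrable_const (w i)).indicator (hLmeas i)
  have hRi : ∀ i : Fin n, Integrable ((Rset i).indicator (fun _ => w i)) μ :=
    fun i => (integrable_const (w i)).indicator (hRmeas i)
  calc (∫ ω, ∑ i ∈ Finset.univ.filter (fun i => X i ω = true ∧ Y i ω = false ∧
        Improves M' w i (Sf ω)), w i ∂μ)
      = ∫ ω, ∑ i : Fin n, (Lset i).indicator (fun _ => w i) ω ∂μ := by
        apply integral_congr_ae
        filter_upwards with ω using hLpt ω
    _ = ∑ i : Fin n, ∫ ω, (Lset i).indicator (fun _ => w i) ω ∂μ :=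
        integral_finset_sum _ (fun i _ => hLi i)
    _ = ∑ i : Fin n, (μ (Lset i)).toReal • w i := by
        apply Finset.sum_congr rfl
        intro i _
        exact integral_indicator_const (w i) (hLmeas i)
    _ = ∑ i : Fin n, (μ (Rset i)).toReal • w i := by
        apply Finset.sum_congr rfl
        intro i _
        rw [hmeq i]
    _ = ∑ i : Fin n, ∫ ω, (Rset i).indicator (fun _ => w i) ω ∂μ := by
        apply Finset.sum_congr rfl
        intro i _
        exact (integral_indicator_const (w i) (hRmeas i)).symm
    _ = ∫ ω, ∑ i : Fin n, (Rset i).indicator (fun _ => w i) ω ∂μ :=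
        (integral_finset_sum _ (fun i _ => hRi i)).symm
    _ = ∫ ω, ∑ i ∈ OPT M' w (Sf ω), w i ∂μ := by
        apply integral_congr_ae
        filter_upwards with ω using (hRpt ω).symm

end
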